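/- For any topology T on a finite set X, the quasi-order of the quotient T/T is an equivalence relation, and x ≤_{T/T} y holds if and only if x and y lie in the same connected component of T. -/

import Mathlib

variable {X : Type*}

/-- The specialization quasi-order of a topology: `x ≤_T y` iff every
`T`-open set containing `x` contains `y`. -/
def leT (t : TopologicalSpace X) (x y : X) : Prop :=
  ∀ U : Set X, t.IsOpen U → x ∈ U → y ∈ U

/-- The specialization equivalence `∼_T`. -/
def simT (t : TopologicalSpace X) (x y : X) : Prop :=
  leT t x y ∧ leT t y x

/-- The topology of final segments of a relation `r`. -/
def topOfRel (r : X → X → Prop) : TopologicalSpace X where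
  IsOpen U := ∀ x ∈ U, ∀ y, r x y → y ∈ U
  isOpen_univ := fun _ _ y _ => Set.mem_univ y
  isOpen_inter := fun U V hU hV x hx y hr => ⟨hU x hx.1 y hr, hV x hx.2 y hr⟩
  isOpen_sUnion := fun S hS x hx y hr => by
    obtain ⟨U, hU, hxU⟩ := hx
    exact ⟨U, hU, hS U hU x hxU y hr⟩

/-- `T'` is finer than `T`: every `T`-open set is `T'`-open. -/
def finer (t' t : TopologicalSpace X) : Prop :=
  ∀ U : Set X, t.IsOpen U → t'.IsOpen U

/-- The quasi-order of the quotient topology `T/T'`: the transitive closure of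
`x R y ↔ (x ≤_T y or y ≤_{T'} x)`. -/
def quotRel (t t' : TopologicalSpace X) : X → X → Prop :=
  Relation.ReflTransGen (fun x y => leT t x y ∨ leT t' y x)

/-- The quotient topology `T/T'`. -/
def quotTop (t t' : TopologicalSpace X) : TopologicalSpace X :=
  topOfRel (quotRel t t')

/-- Restriction (subspace topology) of `t` to a subset `Y`. -/
def restrictT (t : TopologicalSpace X) (Y : Set X) : TopologicalSpace Y :=
  t.induced Subtype.val

/-- `T'` is `T`-admissible (`T' ⊚≺ T`). -/
def adm (t' t : TopologicalSpace X) : Prop :=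
  finer t' t ∧
  (∀ Y : Set X, @IsConnected X t' Y → restrictT t' Y = restrictT t Y) ∧
  (∀ x y : X,
    (quotRel t t' x y ∧ quotRel t t' y x) ↔ (quotRel t' t' x y ∧ quotRel t' t' y x))

/-- The quasi-order of T/T is an equivalence, and x ≤_{T/T} y iff x and
 lie in the same connected component of . -/
theorem quotRel_self_equivalence_connected [Finite X] (t : TopologicalSpace X) :
    Equivalence (quotRel t t) ∧
    ∀ x y : X, quotRel t t x y ↔ y ∈ @connectedComponent X t x := by

  letI := t
  have hsymm : Symmetric (quotRel t t) :=
    fun a b h => (@Relation.ReflTransGen.stdSymm X (fun x y => leT t x y ∨ leT t y x)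
      ⟨fun a b h => h.symm⟩).symm a b h
  have hspec : ∀ a b : X, leT t a b ↔ b ⤳ a := by
    intro a b
    rw [specializes_iff_forall_open]
    rfl
  have hcc : ∀ a b : X, leT t a b → a ∈ connectedComponent b := by
    intro a b h
    have hb : a ∈ closure ({b} : Set X) := ((hspec a b).1 h).mem_closure
    exact isConnected_singleton.closure.subset_connectedComponent
      (subset_closure rfl) hb
  have fwd : ∀ x y : X, quotRel t t x y → y ∈ connectedComponent x := by
    intro x y h
    induction h with
    | refl => exact mem_connectedComponent
    | tail _ hbc ih =>
      rcases hbc with h | h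
      · rw [connectedComponent_eq ih, ← connectedComponent_eq (hcc _ _ h)]
        exact mem_connectedComponent
      · rw [connectedComponent_eq ih]
        exact hcc _ _ h
  have bwd : ∀ x y : X, y ∈ connectedComponent x → quotRel t t x y := by
    intro x y hy
    set S : Set X := {z | quotRel t t x z} with hS
    have hOpen : IsOpen S := by
      rw [isOpen_iff_forall_specializes]
      intro a b hab hb
      exact hb.tail (Or.inl ((hspec b a).2 hab))
    have hClosed : IsClosed S := by
      rw [← isOpen_compl_iff, isOpen_iff_forall_specializes]
      intro a b hab hb ha
      exact hb (ha.tail (Or.inr ((hspec b a).2 hab)))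
    exact IsClopen.connectedComponent_subset ⟨hClosed, hOpen⟩
      Relation.ReflTransGen.refl hy
  refine ⟨⟨fun _ => .refl, fun h => hsymm h, fun h1 h2 => h1.trans h2⟩, fun x y => ⟨fwd x y, bwd x y⟩⟩
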